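/- Let ρ and ρ̃ be orthogonal pure states (tr(ρρ̃) = 0) and let {E₁, E₂} be a two-outcome POVM with tr(E₁ρ) = tr(E₁ρ̃) = 1 (hence tr(E₂ρ) = tr(E₂ρ̃) = 0). Then for any ε ∈ (0,1) and any number of repetitions R, the quantity max over density matrices χ₁, χ₂ of (1/2)(tr(ρχ₁) − tr(ρχ₂)) subject to F_C(χ₁,χ₂)^{R/2} ≥ ε/2 equals 1/2, where F_C(χ₁,χ₂) = (Σ_{k=1,2}√(tr(E_kχ₁)tr(E_kχ₂)))². -/

import Mathlib

open ComplexOrder Matrix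

private lemma psd_trace_nonneg {n : ℕ} {M : Matrix (Fin n) (Fin n) ℂ}
    (hM : M.PosSemidef) : 0 ≤ M.trace := by
  rw [Matrix.trace]
  apply Finset.sum_nonneg
  intro i _
  exact hM.diag_nonneg

open scoped MatrixOrder in
private lemma psd_mul_trace_nonneg {n : ℕ} {A B : Matrix (Fin n) (Fin n) ℂ}
    (hA : A.PosSemidef) (hB : B.PosSemidef) : 0 ≤ (A * B).trace := by
  have hA0 : 0 ≤ A := hA.nonneg
  have hS : (CFC.sqrt A).PosSemidef := (CFC.sqrt_nonneg A).posSemidef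
  have h1 : A = CFC.sqrt A * CFC.sqrt A := (CFC.sqrt_mul_sqrt_self A hA0).symm
  have h2 : A * B = CFC.sqrt A * (CFC.sqrt A * B) := by
    rw [← mul_assoc, CFC.sqrt_mul_sqrt_self A hA0]
  have h3 : (A * B).trace = (CFC.sqrt A * B * CFC.sqrt A).trace := by
    rw [h2, Matrix.trace_mul_comm]
  rw [h3]
  have h4 : CFC.sqrt A * B * CFC.sqrt A = CFC.sqrt A * B * (CFC.sqrt A)ᴴ := by
    rw [hS.isHermitian]
  rw [h4]
  exact psd_trace_nonneg (hB.mul_mul_conjTranspose_same (CFC.sqrt A))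

private lemma herm_idem_psd {n : ℕ} {M : Matrix (Fin n) (Fin n) ℂ}
    (hH : M.IsHermitian) (h2 : M * M = M) : M.PosSemidef := by
  have : M = Mᴴ * M := by rw [hH, h2]
  rw [this]
  exact Matrix.posSemidef_conjTranspose_mul_self M

theorem stmt_17 (d : ℕ) (ρ ρt E₁ E₂ : Matrix (Fin d) (Fin d) ℂ)
    (hρH : ρ.IsHermitian) (hρ2 : ρ * ρ = ρ) (hρtr : ρ.trace = 1)
    (hρtH : ρt.IsHermitian) (hρt2 : ρt * ρt = ρt) (hρttr : ρt.trace = 1)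
    (horth : (ρ * ρt).trace = 0)
    (hE₁ : E₁.PosSemidef) (hE₂ : E₂.PosSemidef) (hEsum : E₁ + E₂ = 1)
    (h11 : (E₁ * ρ).trace = 1) (h12 : (E₁ * ρt).trace = 1)
    (R : ℕ) (hR : 0 < R) (ε : ℝ) (hε : ε ∈ Set.Ioo (0:ℝ) 1) :
    IsGreatest {v : ℝ | ∃ χ₁ χ₂ : Matrix (Fin d) (Fin d) ℂ,
      χ₁.PosSemidef ∧ χ₁.trace = 1 ∧ χ₂.PosSemidef ∧ χ₂.trace = 1 ∧
      ((Real.sqrt ((E₁ * χ₁).trace.re * (E₁ * χ₂).trace.re)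
        + Real.sqrt ((E₂ * χ₁).trace.re * (E₂ * χ₂).trace.re))^2) ^ ((R:ℝ)/2) ≥ ε/2 ∧
      v = (1/2) * ((ρ * χ₁).trace.re - (ρ * χ₂).trace.re)} (1/2 : ℝ) := by
  have hρP : ρ.PosSemidef := herm_idem_psd hρH hρ2
  have hρtP : ρt.PosSemidef := herm_idem_psd hρtH hρt2
  have hE₂ρ : (E₂ * ρ).trace = 0 := by
    have : E₂ = 1 - E₁ := by rw [← hEsum, add_sub_cancel_left]
    rw [this, sub_mul, one_mul, Matrix.trace_sub, hρtr, h11, sub_self]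
  have hE₂ρt : (E₂ * ρt).trace = 0 := by
    have : E₂ = 1 - E₁ := by rw [← hEsum, add_sub_cancel_left]
    rw [this, sub_mul, one_mul, Matrix.trace_sub, hρttr, h12, sub_self]
  constructor
  · -- membership: χ₁ = ρ, χ₂ = ρt
    refine ⟨ρ, ρt, hρP, hρtr, hρtP, hρttr, ?_, ?_⟩
    · have h1 : (E₁ * ρ).trace.re = 1 := by rw [h11]; simp
      have h2 : (E₁ * ρt).trace.re = 1 := by rw [h12]; simp
      have h3 : (E₂ * ρ).trace.re = 0 := by rw [hE₂ρ]; simp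
      have h4 : (E₂ * ρt).trace.re = 0 := by rw [hE₂ρt]; simp
      rw [h1, h2, h3, h4]
      norm_num
      linarith [hε.2]
    · have h5 : (ρ * ρ).trace.re = 1 := by rw [hρ2, hρtr]; simp
      have h6 : (ρ * ρt).trace.re = 0 := by rw [horth]; simp
      rw [h5, h6]; ring
  · -- upper bound
    rintro v ⟨χ₁, χ₂, hχ₁P, hχ₁tr, hχ₂P, hχ₂tr, _, hv⟩
    have hb : 0 ≤ ((ρ * χ₂).trace).re := by
      have := psd_mul_trace_nonneg hρP hχ₂P
      exact (Complex.le_def.mp this).1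
    have ha : ((ρ * χ₁).trace).re ≤ 1 := by
      have h1ρ : (1 - ρ).PosSemidef := by
        apply herm_idem_psd
        · exact Matrix.IsHermitian.sub Matrix.isHermitian_one hρH
        · rw [mul_sub, sub_mul, sub_mul, one_mul, mul_one, hρ2]; simp
      have hnn : 0 ≤ ((1 - ρ) * χ₁).trace := psd_mul_trace_nonneg h1ρ hχ₁P
      have heq : ((1 - ρ) * χ₁).trace = 1 - (ρ * χ₁).trace := by
        rw [sub_mul, one_mul, Matrix.trace_sub, hχ₁tr]
      rw [heq] at hnn
      have := (Complex.le_def.mp hnn).1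
      simp only [Complex.sub_re, Complex.one_re, Complex.zero_re] at this
      linarith
    rw [hv]
    linarith
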